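/- Let H be a finite group of odd order such that d(H) ≤ 1. Then the nim-number of the achievement game GEN((Z/2 × Z/2) × H) is *1. -/

import Mathlib

universe u

/-- Combinatorial pregames (removed from Mathlib; restored with the old definition). -/
inductive SetTheory.PGame : Type (u + 1)
  | mk : ∀ α β : Type u, (α → SetTheory.PGame) → (β → SetTheory.PGame) → SetTheory.PGame

/-- The zero pregame, with no options (as in the old Mathlib). -/
instance SetTheory.PGame.instZeroPGame : Zero SetTheory.PGame :=
  ⟨⟨PEmpty, PEmpty, PEmpty.elim, PEmpty.elim⟩⟩

/-- Nimbers: a type synonym for ordinals (removed from Mathlib; restored). -/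
def Nimber : Type (u + 1) := Ordinal.{u}

noncomputable instance Nimber.instLinearOrder : LinearOrder Nimber.{u} :=
  inferInstanceAs (LinearOrder Ordinal.{u})

noncomputable instance Nimber.instInfSet : InfSet Nimber.{u} :=
  inferInstanceAs (InfSet Ordinal.{u})

/-- The identity map from ordinals to nimbers. -/
def Nimber.toNimber : Ordinal.{u} ≃o Nimber.{u} := OrderIso.refl _

prefix:75 "∗" => Nimber.toNimber

/-- The Grundy value of a pregame: the mex of the Grundy values of its left options. -/
noncomputable def SetTheory.PGame.grundyValue : SetTheory.PGame.{u} → Nimber.{u}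
  | mk _ _ L _ => sInf (Set.range fun i => SetTheory.PGame.grundyValue (L i))ᶜ


noncomputable instance Nimber.instZeroAux : Zero Nimber.{u} := ⟨∗0⟩
noncomputable instance Nimber.instOneAux : One Nimber.{u} := ⟨∗1⟩

theorem Ordinal.toNimber_one : ∗(1 : Ordinal.{u}) = (1 : Nimber.{u}) := rfl

theorem Nimber.lt_one_iff_zero {a : Nimber.{u}} : a < 1 ↔ a = 0 :=
  Ordinal.lt_one_iff_zero (a := a)

theorem Nimber.le_zero {a : Nimber.{u}} : a ≤ 0 ↔ a = 0 :=
  ⟨fun h => le_antisymm h (show (0 : Ordinal.{u}) ≤ a from zero_le), fun h => h ▸ le_refl _⟩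

namespace SetTheory.PGame

def LeftMoves : PGame.{u} → Type u
  | mk l _ _ _ => l

def moveLeft : ∀ g : PGame.{u}, LeftMoves g → PGame.{u}
  | mk _ _ L _ => L

@[simp] theorem moveLeft_mk {xl xr : Type u} {xL : xl → PGame.{u}} {xR : xr → PGame.{u}} :
    (mk xl xr xL xR).moveLeft = xL := rfl

theorem grundyValue_eq' (G : PGame.{u}) : grundyValue G =
    (sInf (Set.range fun i => (grundyValue (G.moveLeft i) : Ordinal.{u}))ᶜ : Ordinal.{u}) := by
  cases G
  rw [grundyValue]
  rfl

theorem grundyValue_le_of_forall_moveLeft {G : PGame.{u}} {o : Nimber.{u}}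
    (h : ∀ i, grundyValue (G.moveLeft i) ≠ o) : G.grundyValue ≤ o := by
  rw [grundyValue_eq']
  exact @csInf_le' Ordinal.{u} _ _ o (by rintro ⟨i, hi⟩; exact h i hi)

theorem le_grundyValue_of_Iio_subset_moveLeft {G : PGame.{u}} {o : Nimber.{u}}
    (h : Set.Iio o ⊆ Set.range (grundyValue ∘ G.moveLeft)) : o ≤ grundyValue G := by
  rw [grundyValue_eq']
  by_contra hlt
  have hlt' := lt_of_not_ge hlt
  have hmem := csInf_mem (Ordinal.nonempty_compl_range.{u, u}
    (fun i => (grundyValue (G.moveLeft i) : Ordinal.{u})))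
  exact hmem (h hlt')

theorem grundyValue_ne_moveLeft {G : PGame.{u}} (i : G.LeftMoves) :
    grundyValue (G.moveLeft i) ≠ grundyValue G := by
  intro he
  have hmem := csInf_mem (Ordinal.nonempty_compl_range.{u, u}
    (fun i => (grundyValue (G.moveLeft i) : Ordinal.{u})))
  rw [← grundyValue_eq'] at hmem
  exact hmem ⟨i, he⟩

theorem grundyValue_zero : grundyValue (0 : PGame.{u}) = 0 := by
  rw [grundyValue_eq']
  have : ∀ S : Set Ordinal.{u}, S = Set.univ → sInf S = (0 : Ordinal.{u}) := by
    rintro S rfl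
    rw [csInf_univ]
    rfl
  refine this _ (Set.eq_univ_of_forall fun x => ?_)
  rintro ⟨i, -⟩
  exact PEmpty.elim i

end SetTheory.PGame

/-! Auxiliary decidable facts about the Klein four-group, placed before
`open scoped Classical` so that `decide` works. -/

abbrev Kl := Multiplicative (ZMod 2) × Multiplicative (ZMod 2)

private lemma K_four_aux : ∀ a x c : Kl,
    (a = 1 ∨ x = 1 ∨ x = a) ∨ c ∈ ({1, a, x, a*x} : Finset Kl) := by decide

lemma K_four {a x : Kl} (c : Kl) (ha : a ≠ 1) (hx1 : x ≠ 1) (hxa : x ≠ a) :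
    c = 1 ∨ c = a ∨ c = x ∨ c = a * x := by
  rcases K_four_aux a x c with h | h
  · tauto
  · simpa using h

lemma K_sq : ∀ a : Kl, a * a = 1 := by decide

lemma K_exists : ∀ a : Kl, ∃ x : Kl, x ≠ 1 ∧ x ≠ a := by decide


open SetTheory Nimber
open scoped Classical

/-- The achievement game `GEN(G)` of Anderson and Harary: positions are (finite) subsets
of the finite group `G`; a position that generates `G` is terminal, and otherwise the
options are obtained by selecting a previously-unselected element of `G`.  The game is
impartial, so the left and right options agree. -/
noncomputable def genGame {G : Type} [Group G] [Fintype G] (P : Finset G) : PGame :=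
  if Subgroup.closure (P : Set G) = ⊤ then 0
  else
    PGame.mk {g : G // g ∉ P} {g : G // g ∉ P}
      (fun g => genGame (insert g.1 P)) (fun g => genGame (insert g.1 P))
termination_by Fintype.card G - P.card
decreasing_by
  all_goals
    have h1 : (insert g.1 P).card = P.card + 1 := Finset.card_insert_of_notMem g.2
    have h2 : (insert g.1 P).card ≤ Fintype.card G := Finset.card_le_univ _
    omega

/-- The nim-number of the achievement game `GEN(G)`, i.e. the Sprague-Grundy value of the
starting position `∅`. -/
noncomputable def nimGEN (G : Type) [Group G] [Fintype G] : Nimber :=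
  PGame.grundyValue (genGame (∅ : Finset G))

/-- `d(G)`: the minimal cardinality of a generating set of `G`. -/
noncomputable def minGen (G : Type) [Group G] : ℕ :=
  sInf {n : ℕ | ∃ S : Finset G, S.card = n ∧ Subgroup.closure (S : Set G) = ⊤}

attribute [local instance 2000] Classical.propDecidable

/-! ### Unfolding lemmas for `genGame` -/

lemma genGame_of_ne_top {G : Type} [Group G] [Fintype G] {P : Finset G}
    (h : Subgroup.closure (P : Set G) ≠ ⊤) :
    genGame P = PGame.mk {g : G // g ∉ P} {g : G // g ∉ P}
      (fun g => genGame (insert g.1 P)) (fun g => genGame (insert g.1 P)) := by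
  rw [genGame]; exact if_neg h

lemma genGame_of_top {G : Type} [Group G] [Fintype G] {P : Finset G}
    (h : Subgroup.closure (P : Set G) = ⊤) : genGame P = 0 := by
  rw [genGame]; exact if_pos h

/-! ### Odd-order group facts -/

section OddH
variable {H : Type} [Group H] [Fintype H]

lemma sq_eq_one_of_odd (hH : Odd (Fintype.card H)) {y : H} (h : y * y = 1) : y = 1 := by
  have h2 : orderOf y ∣ 2 := orderOf_dvd_of_pow_eq_one (by rw [pow_two]; exact h)
  rcases (Nat.dvd_prime Nat.prime_two).1 h2 with h' | h'
  · exact orderOf_eq_one_iff.1 h'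
  · exfalso
    have h3 : (2 : ℕ) ∣ Fintype.card H := h' ▸ orderOf_dvd_card (x := y)
    rw [Nat.dvd_iff_mod_eq_zero, Nat.odd_iff.1 hH] at h3
    exact one_ne_zero h3

lemma mem_closure_sq_of_odd (hH : Odd (Fintype.card H)) (y : H) :
    y ∈ Subgroup.closure ({y * y} : Set H) := by
  have hodd : Odd (orderOf y) := by
    rcases Nat.even_or_odd (orderOf y) with he | ho
    · exfalso
      obtain ⟨k, hk⟩ := he
      have h2 : (2 : ℕ) ∣ orderOf y := ⟨k, by rw [hk, two_mul]⟩
      have h3 : (2 : ℕ) ∣ Fintype.card H := h2.trans (orderOf_dvd_card (x := y))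
      rw [Nat.dvd_iff_mod_eq_zero, Nat.odd_iff.1 hH] at h3
      exact one_ne_zero h3
    · exact ho
  obtain ⟨m, hm⟩ := hodd
  have key : (y * y) ^ (m + 1) = y := by
    rw [← pow_two, ← pow_mul]
    have : 2 * (m + 1) = orderOf y + 1 := by rw [hm]; ring
    rw [this, pow_succ, pow_orderOf_eq_one, one_mul]
  have h0 : y * y ∈ Subgroup.closure ({y * y} : Set H) :=
    Subgroup.subset_closure (Set.mem_singleton _)
  have h1 := Subgroup.pow_mem _ h0 (m + 1)
  rwa [key] at h1

end OddH

/-! ### Structure lemmas for `Kl × H` -/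

section Main
variable {H : Type} [Group H] [Fintype H]

/-- If every element of the closure of `P` has trivial first component, then no single
added element can make `P` generate. -/
lemma no_top_option {P : Finset (Kl × H)}
    (hall : ∀ t ∈ Subgroup.closure (↑P : Set (Kl × H)), (t : Kl × H).1 = 1) (g : Kl × H) :
    Subgroup.closure (↑(insert g P) : Set (Kl × H)) ≠ ⊤ := by
  obtain ⟨c, hc1, hca⟩ := K_exists g.1
  intro htop
  have hU : Subgroup.closure (↑(insert g P) : Set (Kl × H)) ≤
      (Subgroup.closure ({g.1} : Set Kl)).comap (MonoidHom.fst Kl H) := by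
    rw [Subgroup.closure_le]
    intro z hz
    simp only [Finset.coe_insert, Set.mem_insert_iff] at hz
    rcases hz with rfl | hz
    · exact Subgroup.subset_closure rfl
    · have h1 : z.1 = 1 := hall z (Subgroup.subset_closure hz)
      simp only [SetLike.mem_coe, Subgroup.mem_comap, MonoidHom.coe_fst, h1]
      exact Subgroup.one_mem _
  have hcmem : c ∈ Subgroup.closure ({g.1} : Set Kl) := by
    have : ((c, 1) : Kl × H) ∈ Subgroup.closure (↑(insert g P) : Set (Kl × H)) := by
      rw [htop]; trivial
    exact hU this
  obtain ⟨n, hn⟩ := Subgroup.mem_closure_singleton.1 hcmem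
  rcases Int.even_or_odd n with ⟨k, hk⟩ | ⟨k, hk⟩
  · apply hc1
    rw [← hn, hk, zpow_add, K_sq]
  · apply hca
    have h2 : g.1 ^ (2 : ℤ) = 1 := by rw [zpow_two]; exact K_sq g.1
    rw [← hn, hk, zpow_add, zpow_one, zpow_mul, h2, one_zpow, one_mul]

/-- If the closure of `P` contains an element with nontrivial first component and is not
everything, then there is a legal move making the position generate. -/
lemma exists_top_option (hH : Odd (Fintype.card H)) {y₀ : H}
    (hy : Subgroup.closure ({y₀} : Set H) = ⊤) {P : Finset (Kl × H)}
    (hne : Subgroup.closure (↑P : Set (Kl × H)) ≠ ⊤) {t : Kl × H}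
    (ht : t ∈ Subgroup.closure (↑P : Set (Kl × H))) (ht1 : t.1 ≠ 1) :
    ∃ g : Kl × H, g ∉ P ∧ Subgroup.closure (↑(insert g P) : Set (Kl × H)) = ⊤ := by
  obtain ⟨t1, t2⟩ := t
  replace ht1 : t1 ≠ 1 := ht1
  obtain ⟨x, hx1, hxt⟩ := K_exists t1
  set g : Kl × H := (x, y₀) with hg
  set T := Subgroup.closure (↑(insert g P) : Set (Kl × H)) with hT
  have hPT : Subgroup.closure (↑P : Set (Kl × H)) ≤ T :=
    Subgroup.closure_mono (by simp [Finset.coe_insert, Set.subset_insert])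
  have hgT : g ∈ T := Subgroup.subset_closure (by simp)
  have hsqT : ((1 : Kl), y₀ * y₀) ∈ T := by
    have := mul_mem hgT hgT
    simpa [hg, Prod.mk_mul_mk, K_sq] using this
  have hsq_top : Subgroup.closure ({y₀ * y₀} : Set H) = ⊤ := by
    rw [eq_top_iff, ← hy, Subgroup.closure_le]
    intro z hz
    rcases hz with rfl
    exact mem_closure_sq_of_odd hH z
  have hH2 : ∀ z : H, ((1 : Kl), z) ∈ T := by
    intro z
    have hz : z ∈ Subgroup.closure ({y₀ * y₀} : Set H) := by rw [hsq_top]; trivial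
    have hmap : ((1 : Kl), z) ∈
        (Subgroup.closure ({y₀ * y₀} : Set H)).map (MonoidHom.inr Kl H) :=
      Subgroup.mem_map_of_mem _ hz
    rw [MonoidHom.map_closure] at hmap
    have hle : Subgroup.closure ((MonoidHom.inr Kl H) '' {y₀ * y₀}) ≤ T := by
      rw [Subgroup.closure_le]
      intro w hw
      simp only [Set.image_singleton, Set.mem_singleton_iff] at hw
      rcases hw with rfl
      exact hsqT
    exact hle hmap
  have hxT : ((x : Kl), (1 : H)) ∈ T := by
    have := mul_mem hgT (hH2 y₀⁻¹)
    simpa [hg, Prod.mk_mul_mk] using this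
  have htT : ((t1 : Kl), (1 : H)) ∈ T := by
    have := mul_mem (hPT ht) (hH2 t2⁻¹)
    simpa [Prod.mk_mul_mk] using this
  have hfst : ∀ c : Kl, ((c : Kl), (1 : H)) ∈ T := by
    intro c
    rcases K_four c ht1 hx1 hxt with rfl | rfl | rfl | rfl
    · exact one_mem T
    · exact htT
    · exact hxT
    · have := mul_mem htT hxT
      simpa [Prod.mk_mul_mk] using this
  have htop : T = ⊤ := by
    rw [Subgroup.eq_top_iff']
    rintro ⟨c, z⟩
    have := mul_mem (hfst c) (hH2 z)
    simpa [Prod.mk_mul_mk] using this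
  refine ⟨g, ?_, htop⟩
  intro hgP
  have hins : insert g P = P := Finset.insert_eq_self.2 hgP
  rw [hT, hins] at htop
  exact hne htop

/-- If every element of a closure has trivial first component, the closure has odd order. -/
lemma odd_card_closure (hH : Odd (Fintype.card H)) {P : Finset (Kl × H)}
    (hall : ∀ t ∈ Subgroup.closure (↑P : Set (Kl × H)), (t : Kl × H).1 = 1) :
    Odd (Nat.card (Subgroup.closure (↑P : Set (Kl × H)))) := by
  set s := Subgroup.closure (↑P : Set (Kl × H)) with hs
  rw [Nat.card_eq_fintype_card]
  rcases Nat.even_or_odd (Fintype.card s) with he | ho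
  · exfalso
    have h2 : (2 : ℕ) ∣ Fintype.card s := by
      obtain ⟨k, hk⟩ := he; exact ⟨k, by rw [hk, two_mul]⟩
    obtain ⟨x, hx⟩ := exists_prime_orderOf_dvd_card 2 h2
    have hx2 : x * x = 1 := by
      have := pow_orderOf_eq_one x
      rwa [hx, pow_two] at this
    have hxv : (x : Kl × H) * (x : Kl × H) = 1 := by
      exact_mod_cast hx2
    have hx1 : (x : Kl × H).1 = 1 := hall _ x.2
    have hx2H : (x : Kl × H).2 * (x : Kl × H).2 = 1 := by
      have := congrArg Prod.snd hxv
      simpa using this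
    have hxsnd : (x : Kl × H).2 = 1 := sq_eq_one_of_odd hH hx2H
    have hxone : x = 1 := by
      have : (x : Kl × H) = 1 := Prod.ext hx1 hxsnd
      exact_mod_cast this
    rw [hxone, orderOf_one] at hx
    exact absurd hx (by norm_num)
  · exact ho

/-- If the closure contains an element with nontrivial first component, it has even order. -/
lemma even_card_closure {P : Finset (Kl × H)} {t : Kl × H}
    (ht : t ∈ Subgroup.closure (↑P : Set (Kl × H))) (ht1 : t.1 ≠ 1) :
    (2 : ℕ) ∣ Nat.card (Subgroup.closure (↑P : Set (Kl × H))) := by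
  set s := Subgroup.closure (↑P : Set (Kl × H)) with hs
  rw [Nat.card_eq_fintype_card]
  set t' : s := ⟨t, ht⟩ with ht'
  have h1 : orderOf t.1 = 2 := by
    have : t.1 ^ 2 = 1 := by rw [pow_two]; exact K_sq t.1
    exact orderOf_eq_prime this ht1
  have h2 : orderOf ((MonoidHom.fst Kl H).comp s.subtype t') = orderOf t.1 := rfl
  have h3 : orderOf ((MonoidHom.fst Kl H).comp s.subtype t') ∣ orderOf t' :=
    orderOf_map_dvd _ _
  rw [h2, h1] at h3
  exact h3.trans orderOf_dvd_card

/-- If `P.card` differs from the order of its closure, there is a "stay" move. -/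
lemma exists_stay {G : Type} [Group G] [Fintype G] {P : Finset G}
    (hcard : P.card ≠ Nat.card (Subgroup.closure (↑P : Set G))) :
    ∃ h ∈ Subgroup.closure (↑P : Set G), h ∉ P := by
  by_contra hcon
  push_neg at hcon
  have hsub : (Subgroup.closure (↑P : Set G) : Set G) = ↑P := by
    apply Set.Subset.antisymm
    · intro z hz; exact hcon z hz
    · exact Subgroup.subset_closure
  apply hcard
  have h1 : Nat.card (Subgroup.closure (↑P : Set G)) =
      ((Subgroup.closure (↑P : Set G) : Set G)).ncard := by
    rw [← Nat.card_coe_set_eq]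
    rfl
  rw [h1, hsub, Set.ncard_coe_finset]

lemma closure_insert_self {G : Type} [Group G] [Fintype G] {P : Finset G} {h : G}
    (hh : h ∈ Subgroup.closure (↑P : Set G)) :
    Subgroup.closure (↑(insert h P) : Set G) = Subgroup.closure (↑P : Set G) := by
  apply le_antisymm
  · rw [Subgroup.closure_le]
    intro z hz
    simp only [Finset.coe_insert, Set.mem_insert_iff] at hz
    rcases hz with rfl | hz
    · exact hh
    · exact Subgroup.subset_closure hz
  · exact Subgroup.closure_mono (by simp [Finset.coe_insert, Set.subset_insert])

end Main

/-! ### The main classification of Grundy values -/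

section MainInduction
variable {H : Type} [Group H] [Fintype H]

lemma nimber_zero_lt_one : (0 : Nimber) < 1 := Nimber.lt_one_iff_zero.2 rfl

lemma grundy_classification (hH : Odd (Fintype.card H)) {y₀ : H}
    (hy : Subgroup.closure ({y₀} : Set H) = ⊤) :
    ∀ n : ℕ, ∀ P : Finset (Kl × H), Fintype.card (Kl × H) - P.card ≤ n →
      Subgroup.closure (↑P : Set (Kl × H)) ≠ ⊤ →
      ((Even P.card → PGame.grundyValue (genGame P) = 1) ∧
        (¬Even P.card → (∀ t ∈ Subgroup.closure (↑P : Set (Kl × H)), (t : Kl × H).1 = 1) →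
          PGame.grundyValue (genGame P) = 0) ∧
        (¬Even P.card → (∃ t ∈ Subgroup.closure (↑P : Set (Kl × H)), (t : Kl × H).1 ≠ 1) →
          PGame.grundyValue (genGame P) ≠ 0 ∧ PGame.grundyValue (genGame P) ≠ 1)) := by
  intro n
  induction n with
  | zero =>
    intro P hc hne
    exfalso
    have h1 : P.card ≤ Fintype.card (Kl × H) := Finset.card_le_univ P
    have h2 : P.card = Fintype.card (Kl × H) :=
      le_antisymm h1 (Nat.sub_eq_zero_iff_le.1 (Nat.le_zero.1 hc))
    apply hne
    rw [Finset.eq_univ_of_card P h2, Finset.coe_univ, Subgroup.closure_univ]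
  | succ n IH =>
    intro P hc hne
    have hlt : P.card < Fintype.card (Kl × H) := by
      have h1 : P.card ≤ Fintype.card (Kl × H) := Finset.card_le_univ P
      rcases lt_or_eq_of_le h1 with h | h
      · exact h
      · exfalso; apply hne
        rw [Finset.eq_univ_of_card P h, Finset.coe_univ, Subgroup.closure_univ]
    have hins_card : ∀ g : Kl × H, g ∉ P → (insert g P).card = P.card + 1 := fun g hg =>
      Finset.card_insert_of_notMem hg
    have hIH : ∀ g : Kl × H, g ∉ P →
        Subgroup.closure (↑(insert g P) : Set (Kl × H)) ≠ ⊤ →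
        ((Even (insert g P).card → PGame.grundyValue (genGame (insert g P)) = 1) ∧
          (¬Even (insert g P).card →
            (∀ t ∈ Subgroup.closure (↑(insert g P) : Set (Kl × H)), (t : Kl × H).1 = 1) →
            PGame.grundyValue (genGame (insert g P)) = 0) ∧
          (¬Even (insert g P).card →
            (∃ t ∈ Subgroup.closure (↑(insert g P) : Set (Kl × H)), (t : Kl × H).1 ≠ 1) →
            PGame.grundyValue (genGame (insert g P)) ≠ 0 ∧
              PGame.grundyValue (genGame (insert g P)) ≠ 1)) := by
      intro g hg hne'
      apply IH (insert g P) ?_ hne'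
      rw [hins_card g hg, ← Nat.sub_sub]
      have h4 := Nat.sub_le_sub_right hc 1
      rwa [Nat.succ_sub_one] at h4
    rw [genGame_of_ne_top hne]
    refine ⟨?_, ?_, ?_⟩
    · -- even cardinality: Grundy value 1
      intro hEv
      have hopt1 : ∀ g : Kl × H, g ∉ P →
          PGame.grundyValue (genGame (insert g P)) ≠ 1 := by
        intro g hg
        by_cases htop : Subgroup.closure (↑(insert g P) : Set (Kl × H)) = ⊤
        · rw [genGame_of_top htop, PGame.grundyValue_zero]
          exact nimber_zero_lt_one.ne
        · have hodd : ¬ Even (insert g P).card := by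
            rw [hins_card g hg]; simpa [Nat.even_add_one] using hEv
          by_cases hE : ∃ t ∈ Subgroup.closure (↑(insert g P) : Set (Kl × H)),
              (t : Kl × H).1 ≠ 1
          · exact ((hIH g hg htop).2.2 hodd hE).2
          · push_neg at hE
            rw [(hIH g hg htop).2.1 hodd hE]
            exact nimber_zero_lt_one.ne
      apply le_antisymm
      · apply PGame.grundyValue_le_of_forall_moveLeft
        intro i
        simp only [PGame.moveLeft_mk]
        exact hopt1 i.1 i.2
      · apply PGame.le_grundyValue_of_Iio_subset_moveLeft
        intro w hw
        rw [Set.mem_Iio, Nimber.lt_one_iff_zero] at hw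
        subst hw
        obtain ⟨g, hg, hval⟩ : ∃ g, g ∉ P ∧
            PGame.grundyValue (genGame (insert g P)) = 0 := by
          by_cases hE : ∃ t ∈ Subgroup.closure (↑P : Set (Kl × H)), (t : Kl × H).1 ≠ 1
          · obtain ⟨t, ht, ht1⟩ := hE
            obtain ⟨g, hg, htop⟩ := exists_top_option hH hy hne ht ht1
            exact ⟨g, hg, by rw [genGame_of_top htop, PGame.grundyValue_zero]⟩
          · push_neg at hE
            have hoddS := odd_card_closure hH hE
            obtain ⟨h, hmem, hnotP⟩ := exists_stay (P := P) (by
              intro heq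
              exact (Nat.not_even_iff_odd.2 hoddS) (heq ▸ hEv))
            have hcl := closure_insert_self hmem
            refine ⟨h, hnotP, ?_⟩
            have hne' : Subgroup.closure (↑(insert h P) : Set (Kl × H)) ≠ ⊤ := by
              rw [hcl]; exact hne
            have hodd' : ¬ Even (insert h P).card := by
              rw [hins_card h hnotP]; simpa [Nat.even_add_one] using hEv
            have hall' : ∀ t ∈ Subgroup.closure (↑(insert h P) : Set (Kl × H)),
                (t : Kl × H).1 = 1 := by rw [hcl]; exact hE
            exact (hIH h hnotP hne').2.1 hodd' hall'
        exact ⟨⟨g, hg⟩, by simpa only [Function.comp, PGame.moveLeft_mk] using hval⟩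
    · -- odd cardinality, closure inside 1 × H : Grundy value 0
      intro hodd hall
      rw [← Nimber.le_zero]
      apply PGame.grundyValue_le_of_forall_moveLeft
      intro i
      simp only [PGame.moveLeft_mk]
      have hne' : Subgroup.closure (↑(insert i.1 P) : Set (Kl × H)) ≠ ⊤ :=
        no_top_option hall i.1
      have hev' : Even (insert i.1 P).card := by
        rw [hins_card i.1 i.2]; simpa [Nat.even_add_one] using hodd
      rw [(hIH i.1 i.2 hne').1 hev']
      exact nimber_zero_lt_one.ne'
    · -- odd cardinality, closure meets nontrivial first components
      intro hodd hE
      obtain ⟨t, ht, ht1⟩ := hE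
      constructor
      · obtain ⟨g, hg, htop⟩ := exists_top_option hH hy hne ht ht1
        intro h0
        have hnm := PGame.grundyValue_ne_moveLeft
          (G := PGame.mk {g : Kl × H // g ∉ P} {g : Kl × H // g ∉ P}
            (fun g => genGame (insert g.1 P)) (fun g => genGame (insert g.1 P))) ⟨g, hg⟩
        rw [h0] at hnm
        apply hnm
        simp only [PGame.moveLeft_mk]
        rw [genGame_of_top htop, PGame.grundyValue_zero]
      · have h2 : (2 : ℕ) ∣ Nat.card (Subgroup.closure (↑P : Set (Kl × H))) :=
          even_card_closure ht ht1
        obtain ⟨h, hmem, hnotP⟩ := exists_stay (P := P) (by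
          intro heq
          apply hodd
          obtain ⟨k, hk⟩ := h2
          exact ⟨k, by rw [heq, hk, two_mul]⟩)
        have hcl := closure_insert_self hmem
        have hne' : Subgroup.closure (↑(insert h P) : Set (Kl × H)) ≠ ⊤ := by
          rw [hcl]; exact hne
        have hev' : Even (insert h P).card := by
          rw [hins_card h hnotP]; simpa [Nat.even_add_one] using hodd
        have hval : PGame.grundyValue (genGame (insert h P)) = 1 :=
          (hIH h hnotP hne').1 hev'
        intro h1
        have hnm := PGame.grundyValue_ne_moveLeft
          (G := PGame.mk {g : Kl × H // g ∉ P} {g : Kl × H // g ∉ P}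
            (fun g => genGame (insert g.1 P)) (fun g => genGame (insert g.1 P))) ⟨h, hnotP⟩
        rw [h1] at hnm
        apply hnm
        simp only [PGame.moveLeft_mk]
        exact hval

end MainInduction

theorem nimGEN_Z2sq_times_odd_of_minGen_le_one (H : Type) [Group H] [Fintype H]
    (hH : Odd (Fintype.card H)) (hd : minGen H ≤ 1) :
    nimGEN ((Multiplicative (ZMod 2) × Multiplicative (ZMod 2)) × H) = ∗1 := by
  obtain ⟨y₀, hy⟩ : ∃ y : H, Subgroup.closure ({y} : Set H) = ⊤ := by
    have hnonempty : {n : ℕ | ∃ S : Finset H, S.card = n ∧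
        Subgroup.closure (S : Set H) = ⊤}.Nonempty :=
      ⟨Fintype.card H, Finset.univ, Finset.card_univ,
        by rw [Finset.coe_univ, Subgroup.closure_univ]⟩
    obtain ⟨S, hScard, hSgen⟩ := Nat.sInf_mem hnonempty
    have hS1 : S.card ≤ 1 := by rw [hScard]; exact hd
    rcases Nat.le_one_iff_eq_zero_or_eq_one.1 hS1 with h0 | h1
    · refine ⟨1, ?_⟩
      rw [Finset.card_eq_zero] at h0
      rw [h0, Finset.coe_empty, Subgroup.closure_empty] at hSgen
      rw [Subgroup.closure_singleton_one]
      exact hSgen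
    · obtain ⟨y, hy⟩ := Finset.card_eq_one.1 h1
      refine ⟨y, ?_⟩
      rw [hy, Finset.coe_singleton] at hSgen
      exact hSgen
  have hnontriv : Nontrivial (Kl × H) := by
    obtain ⟨a, ha, -⟩ := K_exists 1
    exact ⟨⟨(a, 1), 1, fun h => ha (congrArg Prod.fst h)⟩⟩
  have hne : Subgroup.closure ((↑(∅ : Finset (Kl × H))) : Set (Kl × H)) ≠ ⊤ := by
    rw [Finset.coe_empty, Subgroup.closure_empty]
    exact bot_ne_top
  have hmain := (grundy_classification hH hy (Fintype.card (Kl × H)) ∅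
    (by simp) hne).1 (by simp)
  rw [nimGEN]
  exact hmain.trans Ordinal.toNimber_one.symm
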